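/- For ε ∈ (0,1) and p ∈ ℂ with 0 < (1-|p|²)² - ε, setting S := (1-|p|²)² - ε > 0, the inequality |1-2p+|p|²|²·2|p|²·ε + 2|p|²ε² + 2εS·|1-p|² > 2|p|²ε·|ε - (1-2p+|p|²)²| holds; equivalently, dividing by 2ε: |p|²|1-2p+|p|²|² + |p|²ε + S|1-p|² > |p|²·|ε - (1-2p+|p|²)²|. -/

import Mathlib

open Complex

theorem stmt18 (ε : ℝ) (hε : 0 < ε) (hε1 : ε < 1) (p : ℂ)
    (hp : ε < (1 - ‖p‖ ^ 2) ^ 2) :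
    let S : ℝ := (1 - ‖p‖ ^ 2) ^ 2 - ε
    let b : ℂ := 1 - 2 * p + ((‖p‖ ^ 2 : ℝ) : ℂ)
    (‖b‖ ^ 2 * (2 * ‖p‖ ^ 2 * ε) + 2 * ‖p‖ ^ 2 * ε ^ 2
        + 2 * ε * S * ‖1 - p‖ ^ 2 >
      2 * ‖p‖ ^ 2 * ε * ‖(ε : ℂ) - b ^ 2‖) ∧
    (‖p‖ ^ 2 * ‖b‖ ^ 2 + ‖p‖ ^ 2 * ε
        + S * ‖1 - p‖ ^ 2 >
      ‖p‖ ^ 2 * ‖(ε : ℂ) - b ^ 2‖) := by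
  intro S b
  have hp1 : p ≠ 1 := by
    intro h
    rw [h] at hp
    simp at hp
    linarith
  have hS : 0 < S := by simp only [S]; linarith
  have h1p : 0 < ‖1 - p‖ ^ 2 := by
    exact pow_pos (norm_pos_iff.mpr (sub_ne_zero.mpr (Ne.symm hp1))) 2
  have key : ‖(ε : ℂ) - b ^ 2‖ ≤ ε + ‖b‖ ^ 2 := by
    have t := norm_add_le (ε : ℂ) (-(b ^ 2))
    rw [← sub_eq_add_neg, norm_neg, norm_pow, Complex.norm_real, Real.norm_eq_abs, abs_of_pos hε] at t
    exact t
  have hbp : (0 : ℝ) ≤ ‖p‖ ^ 2 := by positivity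
  constructor
  · nlinarith [mul_le_mul_of_nonneg_left key hbp, mul_pos hS h1p]
  · nlinarith [mul_le_mul_of_nonneg_left key hbp, mul_pos hS h1p]
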